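/- arXiv:1201.4427 — 2 statements merged into one kernel-verified Lean document; each statement's English description precedes it below -/
import Mathlib

section
/- The matroid M12 is self-dual, that is, M12 is isomorphic to its dual M12*. -/
open Matroid Set

namespace StrongSplitter

variable {α β : Type*}

/-- The deletion `M \ D` of a set `D` from the matroid `M`. -/
def del (M : Matroid α) (D : Set α) : Matroid α := M ↾ (M.E \ D)

/-- The contraction `M / C` of a set `C` from the matroid `M`. -/
def con (M : Matroid α) (C : Set α) : Matroid α := (del M✶ C)✶

/-- `N` is a minor of `M` if it is obtained from `M` by contractions and deletions. -/
def IsMinor (N M : Matroid α) : Prop := ∃ C D : Set α, N = del (con M C) D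

/-- `N` is a proper minor of `M`. -/
def IsProperMinor (N M : Matroid α) : Prop := IsMinor N M ∧ N ≠ M

/-- The rank of a set `X` in a matroid `M` : the supremum of the cardinalities of the
independent subsets of `X`. -/
noncomputable def rk (M : Matroid α) (X : Set α) : ℕ∞ :=
  ⨆ I : {I : Set α // M.Indep I ∧ I ⊆ X}, (I : Set α).encard

/-- The rank of the matroid `M`. -/
noncomputable def rank (M : Matroid α) : ℕ∞ := rk M M.E

/-- `(A, B)` is a `k`-separation of `M` : a partition of the ground set into sets of size at
least `k` with `λ(A) = r(A) + r(B) - r(M) ≤ k - 1`. -/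
def IsKSep (M : Matroid α) (k : ℕ) (A B : Set α) : Prop :=
  A ∪ B = M.E ∧ Disjoint A B ∧ k ≤ A.encard ∧ k ≤ B.encard ∧
    rk M A + rk M B + 1 ≤ rank M + k

/-- `M` is `n`-connected (for `n ≥ 2`) if it has no `k`-separation for any `k ≤ n - 1`. -/
def NConn (M : Matroid α) (n : ℕ) : Prop :=
  ∀ (k : ℕ) (A B : Set α), 1 ≤ k → k ≤ n - 1 → ¬ IsKSep M k A B

/-- A matroid is connected when it is 2-connected, i.e. it has no 1-separation. -/
def Connected (M : Matroid α) : Prop := NConn M 2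

/-- A matroid is 3-connected if it has no 1- or 2-separation; by convention we require at
least four elements. -/
def ThreeConnected (M : Matroid α) : Prop := 4 ≤ M.E.encard ∧ NConn M 3

/-- A matroid is simple if every subset of the ground set with at most two elements is
independent (no loops and no parallel pairs). -/
def Simple (M : Matroid α) : Prop := ∀ X ⊆ M.E, X.encard ≤ 2 → M.Indep X

/-- A matroid is cosimple if its dual is simple. -/
def Cosimple (M : Matroid α) : Prop := Simple M✶

/-- A circuit is a minimal dependent set. -/
def Circuit (M : Matroid α) (C : Set α) : Prop :=
  C ⊆ M.E ∧ ¬ M.Indep C ∧ ∀ X, X ⊂ C → M.Indep X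

/-- A triad is a 3-element cocircuit. -/
def Triad (M : Matroid α) (T : Set α) : Prop := Circuit M✶ T ∧ T.encard = 3

/-- An isomorphism between matroids is a bijection between the ground sets preserving
independence. -/
def Iso (M : Matroid α) (N : Matroid β) : Prop :=
  ∃ f : α → β, Set.InjOn f M.E ∧ f '' M.E = N.E ∧
    ∀ I ⊆ M.E, (M.Indep I ↔ N.Indep (f '' I))

/-- `M` has a minor isomorphic to `N`. -/
def HasIsoMinor (M : Matroid α) (N : Matroid β) : Prop :=
  ∃ P : Matroid α, IsMinor P M ∧ Iso P N

/-- `M` is a single-element extension of `N`, i.e. `M \ e = N` for some `e`. -/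
def IsExtOf (M N : Matroid α) : Prop := ∃ e ∈ M.E, N = del M {e}

/-- `M` is a single-element coextension of `N`, i.e. `M / e = N` for some `e`. -/
def IsCoextOf (M N : Matroid α) : Prop := ∃ e ∈ M.E, N = con M {e}

/-- `M` is representable over the field `F`. -/
def RepOver (F : Type) [Field F] (M : Matroid α) : Prop :=
  ∃ (V : Type) (_ : AddCommGroup V) (_ : Module F V) (v : α → V),
    ∀ I ⊆ M.E, (M.Indep I ↔ LinearIndependent F (fun x : I => v x))

/-- A binary matroid is one representable over GF(2). -/
def Binary (M : Matroid α) : Prop := RepOver (ZMod 2) M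

/-- A regular matroid is one representable over every field. -/
def Regular (M : Matroid α) : Prop := ∀ (F : Type) [Field F], RepOver F M

/-- A matroid is almost-regular if it is non-regular and, for every element `e`,
`M \ e` or `M / e` is regular. -/
def AlmostRegular (M : Matroid α) : Prop :=
  ¬ Regular M ∧ ∀ e ∈ M.E, Regular (del M {e}) ∨ Regular (con M {e})

/-- `M` is the binary matroid represented by the matrix `A` (with columns indexed by the
ground set `Fin m`). -/
def RepBy {n m : ℕ} (M : Matroid (Fin m)) (A : Matrix (Fin n) (Fin m) (ZMod 2)) : Prop :=
  M.E = Set.univ ∧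
    ∀ I : Set (Fin m), M.Indep I ↔ LinearIndependent (ZMod 2) (fun x : I => A.transpose x)

/-- The columns of the binary representation of the cycle matroid `M(W_n)` of the wheel with
`n` spokes: spokes `inl i` are standard basis vectors, rim edges `inr i` are `e_i + e_{i+1}`. -/
def wheelMat (n : ℕ) : (Fin n ⊕ Fin n) → (Fin n → ZMod 2) := fun x j =>
  match x with
  | .inl i => if j = i then 1 else 0
  | .inr i => (if j = i then 1 else 0) + (if (j : ℕ) = ((i : ℕ) + 1) % n then 1 else 0)

/-- `N` is isomorphic to the wheel `M(W_n)`. -/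
def IsWheel (n : ℕ) (N : Matroid β) : Prop :=
  ∃ W : Matroid (Fin n ⊕ Fin n), W.E = Set.univ ∧
    (∀ I : Set (Fin n ⊕ Fin n),
      W.Indep I ↔ LinearIndependent (ZMod 2) (fun x : I => wheelMat n x)) ∧
    Iso N W

/-- `N` is isomorphic to the whirl `W^n`, obtained from the wheel `M(W_n)` by relaxing the
rim circuit-hyperplane (the bases of the whirl are the bases of the wheel, plus the rim). -/
def IsWhirl (n : ℕ) (N : Matroid β) : Prop :=
  ∃ W Wh : Matroid (Fin n ⊕ Fin n), W.E = Set.univ ∧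
    (∀ I : Set (Fin n ⊕ Fin n),
      W.Indep I ↔ LinearIndependent (ZMod 2) (fun x : I => wheelMat n x)) ∧
    Wh.E = Set.univ ∧
    (∀ B : Set (Fin n ⊕ Fin n), Wh.IsBase B ↔ (W.IsBase B ∨ B = Set.range Sum.inr)) ∧
    Iso N Wh

/-- `M` has no minor isomorphic to the wheel `M(W_n)`. -/
def NoWheelMinor (n : ℕ) (M : Matroid α) : Prop :=
  ¬ ∃ P : Matroid α, IsMinor P M ∧ IsWheel n P

/-- `M` has no minor isomorphic to the whirl `W^n`. -/
def NoWhirlMinor (n : ℕ) (M : Matroid α) : Prop :=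
  ¬ ∃ P : Matroid α, IsMinor P M ∧ IsWhirl n P


/-- The matrix `[I_5 | D4]` representing `E4` over GF(2). -/
def e4Mat : Matrix (Fin 5) (Fin 10) (ZMod 2) :=
  !![1,0,0,0,0, 0,1,1,1,1;
     0,1,0,0,0, 1,0,1,1,0;
     0,0,1,0,0, 1,1,0,1,0;
     0,0,0,1,0, 1,1,1,1,0;
     0,0,0,0,1, 1,1,0,0,1]

/-- The matrix `[I_5 | D5]` representing `E5` over GF(2). -/
def e5Mat : Matrix (Fin 5) (Fin 10) (ZMod 2) :=
  !![1,0,0,0,0, 0,1,1,1,1;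
     0,1,0,0,0, 1,0,1,1,0;
     0,0,1,0,0, 1,1,0,1,1;
     0,0,0,1,0, 1,1,1,1,0;
     0,0,0,0,1, 1,1,0,0,0]

/-- The matrix `[I_6 | D]` representing `M12` over GF(2). -/
def m12Mat : Matrix (Fin 6) (Fin 12) (ZMod 2) :=
  !![1,0,0,0,0,0, 0,1,1,1,1,1;
     0,1,0,0,0,0, 1,0,1,1,0,0;
     0,0,1,0,0,0, 1,1,0,1,1,0;
     0,0,0,1,0,0, 1,1,1,1,0,1;
     0,0,0,0,1,0, 1,1,0,0,0,1;
     0,0,0,0,0,1, 1,0,0,1,1,1]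

/-- The matrix `[I_5 | D]` representing `R17` over GF(2). -/
def r17Mat : Matrix (Fin 5) (Fin 17) (ZMod 2) :=
  !![1,0,0,0,0, 0,1,1,1,1,0,0,0,0,1,1,1;
     0,1,0,0,0, 1,0,1,1,0,0,1,1,1,0,0,1;
     0,0,1,0,0, 1,1,0,1,1,1,0,0,1,0,1,1;
     0,0,0,1,0, 1,1,1,1,0,1,0,1,0,1,0,0;
     0,0,0,0,1, 1,1,0,0,0,1,1,0,0,1,1,1]

/-- The matrix `[I_5 | D5 | (0,0,1,0,1)ᵀ]` representing the extension `A` of `E5`. -/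
def aMat : Matrix (Fin 5) (Fin 11) (ZMod 2) :=
  !![1,0,0,0,0, 0,1,1,1,1, 0;
     0,1,0,0,0, 1,0,1,1,0, 0;
     0,0,1,0,0, 1,1,0,1,1, 1;
     0,0,0,1,0, 1,1,1,1,0, 0;
     0,0,0,0,1, 1,1,0,0,0, 1]

/-- The matrix `[I_5 | D5 | (1,0,0,1,1)ᵀ]` representing the extension `B` of `E5`. -/
def bMat : Matrix (Fin 5) (Fin 11) (ZMod 2) :=
  !![1,0,0,0,0, 0,1,1,1,1, 1;
     0,1,0,0,0, 1,0,1,1,0, 0;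
     0,0,1,0,0, 1,1,0,1,1, 0;
     0,0,0,1,0, 1,1,1,1,0, 1;
     0,0,0,0,1, 1,1,0,0,0, 1]

/-- The matrix `[I_5 | D5 | (1,1,0,0,1)ᵀ]` representing the extension `C` of `E5`. -/
def cMat : Matrix (Fin 5) (Fin 11) (ZMod 2) :=
  !![1,0,0,0,0, 0,1,1,1,1, 1;
     0,1,0,0,0, 1,0,1,1,0, 1;
     0,0,1,0,0, 1,1,0,1,1, 0;
     0,0,0,1,0, 1,1,1,1,0, 0;
     0,0,0,0,1, 1,1,0,0,0, 1]

/-- The matrix `[I_5 | D]`, `D` the circulant with first row `(1,1,0,0,1)`, representing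
`R10` over GF(2). -/
def r10Mat : Matrix (Fin 5) (Fin 10) (ZMod 2) :=
  !![1,0,0,0,0, 1,1,0,0,1;
     0,1,0,0,0, 1,1,1,0,0;
     0,0,1,0,0, 0,1,1,1,0;
     0,0,0,1,0, 0,0,1,1,1;
     0,0,0,0,1, 1,0,0,1,1]



/-! ### Auxiliary material for the self-duality of `M12` -/

section M12SelfDual

set_option maxRecDepth 100000

/-- The columns of `m12Mat`. -/
private def vcol : Fin 12 → Fin 6 → ZMod 2 := fun j i => m12Mat i j

/-- The columns of `m12Mat`, encoded as bitmasks. -/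
private def xmask (i : Fin 12) : ℕ :=
  [1, 2, 4, 8, 16, 32, 62, 29, 11, 47, 37, 57].getD i.val 0

/-- The self-duality permutation of the ground set. -/
private def fp : Fin 12 → Fin 12 := ![6, 8, 7, 9, 10, 11, 0, 2, 1, 3, 4, 5]

private lemma fp_fp : ∀ x, fp (fp x) = x := by decide

private lemma fp_inj : Function.Injective fp := fun a b h => by
  rw [← fp_fp a, h, fp_fp]

/-- Encoding of a `GF(2)` vector as a bitmask. -/
private def enc (x : Fin 6 → ZMod 2) : ℕ := ∑ i : Fin 6, (x i).val * 2 ^ (i : ℕ)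

private lemma enc_add : ∀ x y : Fin 6 → ZMod 2, enc (x + y) = Nat.xor (enc x) (enc y) := by
  decide

private lemma enc_zero_iff : ∀ x : Fin 6 → ZMod 2, enc x = 0 ↔ x = 0 := by decide

private lemma mask_eq : ∀ j, enc (vcol j) = xmask j := by decide

private lemma two_cases : ∀ x : ZMod 2, x = 0 ∨ x = 1 := by decide

private instance : Std.Commutative Nat.xor := ⟨Nat.xor_comm⟩
private instance : Std.Associative Nat.xor := ⟨Nat.xor_assoc⟩

/-- The linear-independence predicate on finsets of columns. -/
private def Pv (s : Finset (Fin 12)) : Prop :=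
  LinearIndependent (ZMod 2) (fun x : {x // x ∈ s} => vcol x)

/-- A computational linear-independence predicate on lists of columns. -/
private def PvL (l : List (Fin 12)) : Prop :=
  ∀ t ∈ l.sublists, t = [] ∨ t.foldr (fun i r => Nat.xor (xmask i) r) 0 ≠ 0

private instance : DecidablePred PvL := fun l => by unfold PvL; infer_instance

set_option maxHeartbeats 4000000 in
private lemma keyLBool : (((List.finRange 12).sublistsLen 6).all
    (fun l => !(decide (PvL l)) ||
      decide (PvL (((List.finRange 12).filter (· ∉ l)).map fp)))) = true := by decide

private lemma keyL : ∀ l ∈ (List.finRange 12).sublistsLen 6,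
    PvL l → PvL (((List.finRange 12).filter (· ∉ l)).map fp) := by
  intro l hl hp
  have h := List.all_eq_true.mp keyLBool l hl
  simp only [Bool.or_eq_true, Bool.not_eq_true', decide_eq_false_iff_not,
    decide_eq_true_eq] at h
  exact h.elim (fun h1 => absurd hp h1) id

private lemma enc_fold (t : Finset (Fin 12)) :
    enc (∑ i ∈ t, vcol i) = Finset.fold Nat.xor 0 xmask t := by
  classical
  induction t using Finset.induction_on with
  | empty =>
    simp only [Finset.sum_empty, Finset.fold_empty]
    exact (enc_zero_iff 0).mpr rfl
  | insert _ _ h ih =>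
    rw [Finset.sum_insert h, Finset.fold_insert h, enc_add, ih, mask_eq]

private lemma sum_ne_zero_iff_fold (t : Finset (Fin 12)) :
    (∑ i ∈ t, vcol i ≠ 0) ↔ Finset.fold Nat.xor 0 xmask t ≠ 0 := by
  rw [← enc_fold]
  exact not_congr (enc_zero_iff _).symm

private lemma pv_iff_qs (s : Finset (Fin 12)) :
    Pv s ↔ ∀ t ⊆ s, t.Nonempty → ∑ i ∈ t, vcol i ≠ 0 := by
  unfold Pv
  rw [Fintype.linearIndependent_iff]
  constructor
  · intro h t hts ht hsum
    obtain ⟨a, hat⟩ := ht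
    have key := h (fun i => if (i : Fin 12) ∈ t then 1 else 0) ?_ ⟨a, hts hat⟩
    · rw [if_pos hat] at key
      exact one_ne_zero key
    · calc ∑ i : {x // x ∈ s}, (if (i : Fin 12) ∈ t then (1 : ZMod 2) else 0) • vcol ↑i
          = ∑ i : {x // x ∈ s}, (fun j => if j ∈ t then vcol j else 0) ↑i := by
            refine Finset.sum_congr rfl fun i _ => ?_
            by_cases hi : (i : Fin 12) ∈ t <;> simp [hi]
        _ = ∑ i ∈ s, (if i ∈ t then vcol i else 0) :=
            Finset.sum_coe_sort s (fun j => if j ∈ t then vcol j else 0)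
        _ = ∑ i ∈ s ∩ t, vcol i := Finset.sum_ite_mem s t vcol
        _ = ∑ i ∈ t, vcol i := by rw [Finset.inter_eq_right.mpr hts]
        _ = 0 := hsum
  · intro h g hg
    by_contra hne
    push_neg at hne
    obtain ⟨i₀, hi₀⟩ := hne
    set g' : Fin 12 → ZMod 2 := fun i => if h : i ∈ s then g ⟨i, h⟩ else 0 with hg'
    classical
    set t : Finset (Fin 12) := s.filter (fun i => g' i ≠ 0) with ht
    have hts : t ⊆ s := Finset.filter_subset _ _
    have htne : t.Nonempty := by
      refine ⟨i₀, Finset.mem_filter.mpr ⟨i₀.2, ?_⟩⟩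
      show ¬ (if h : (i₀ : Fin 12) ∈ s then g ⟨i₀, h⟩ else 0) = 0
      rw [dif_pos i₀.2]
      exact hi₀
    apply h t hts htne
    have e1 : ∑ i ∈ t, vcol i = ∑ i ∈ s, g' i • vcol i := by
      rw [ht, Finset.sum_filter]
      refine Finset.sum_congr rfl fun i _ => ?_
      rcases two_cases (g' i) with h0 | h1
      · rw [h0]; simp
      · rw [h1]; simp
    have e2 : ∑ i ∈ s, g' i • vcol i = ∑ i : {x // x ∈ s}, g i • vcol ↑i := by
      rw [← Finset.sum_coe_sort s (fun i => g' i • vcol i)]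
      refine Finset.sum_congr rfl fun i _ => ?_
      congr 1
      show (if h : (i : Fin 12) ∈ s then g ⟨i, h⟩ else 0) = g i
      rw [dif_pos i.2]
    rw [e1, e2]
    exact hg

private lemma fold_list_eq (t : List (Fin 12)) (h : t.Nodup) :
    Finset.fold Nat.xor 0 xmask t.toFinset = t.foldr (fun i r => Nat.xor (xmask i) r) 0 := by
  have hval : (t.toFinset.val) = (t : Multiset (Fin 12)) := by
    simp only [List.toFinset, Multiset.toFinset]
    exact Multiset.dedup_eq_self.mpr h
  rw [Finset.fold, hval]
  rw [show (Multiset.map xmask (t : Multiset (Fin 12))) = ((t.map xmask : List ℕ) : Multiset ℕ) from rfl]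
  rw [Multiset.coe_fold_r, List.foldr_map]

private lemma pvL_iff (l : List (Fin 12)) (hl : l.Nodup) : PvL l ↔ Pv l.toFinset := by
  rw [pv_iff_qs]
  constructor
  · intro h t hts ht
    obtain ⟨a, hat⟩ := ht
    classical
    have hsub : (l.filter (fun x => decide (x ∈ t))).Sublist l := List.filter_sublist
    have hmem : l.filter (fun x => decide (x ∈ t)) ∈ l.sublists := List.mem_sublists.mpr hsub
    have hnd : (l.filter (fun x => decide (x ∈ t))).Nodup := hsub.nodup hl
    have htf : (l.filter (fun x => decide (x ∈ t))).toFinset = t := by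
      ext x
      simp only [List.mem_toFinset, List.mem_filter, decide_eq_true_eq]
      constructor
      · exact fun ⟨_, h2⟩ => h2
      · intro hx
        refine ⟨?_, hx⟩
        have := hts hx
        rwa [List.mem_toFinset] at this
    rcases h _ hmem with h0 | hne
    · exfalso
      rw [h0] at htf
      rw [← htf] at hat
      simp at hat
    · rw [sum_ne_zero_iff_fold, ← htf, fold_list_eq _ hnd]
      exact hne
  · intro h t htmem
    rcases eq_or_ne t [] with rfl | hne
    · exact Or.inl rfl
    right
    have hsub := List.mem_sublists.mp htmem
    have hnd := hsub.nodup hl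
    have hts : t.toFinset ⊆ l.toFinset := by
      intro x hx
      rw [List.mem_toFinset] at hx ⊢
      exact hsub.subset hx
    have hno : t.toFinset.Nonempty := by
      rcases t with _ | ⟨a, t⟩
      · exact absurd rfl hne
      · exact ⟨a, by simp⟩
    have := h _ hts hno
    rwa [sum_ne_zero_iff_fold, fold_list_eq _ hnd] at this

private lemma keyD1 (s : Finset (Fin 12)) (h6 : s.card = 6) (hPv : Pv s) :
    Pv (sᶜ.image fp) := by
  classical
  set l := s.sort (· ≤ ·) with hldef
  have hnd : l.Nodup := s.sort_nodup _
  have hts : l.toFinset = s := Finset.sort_toFinset s _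
  have hlen : l.length = 6 := by rw [hldef, Finset.length_sort, h6]
  have hsubl : l.Sublist (List.finRange 12) := by
    refine List.sublist_of_subperm_of_sortedLE ?_ (s.pairwise_sort _).sortedLE ?_
    · exact hnd.subperm (fun x _ => List.mem_finRange x)
    · exact (List.sortedLT_finRange 12).sortedLE
  have hmem : l ∈ (List.finRange 12).sublistsLen 6 := List.mem_sublistsLen.mpr ⟨hsubl, hlen⟩
  have h1 : PvL l := (pvL_iff l hnd).mpr (by rwa [hts])
  have h2 := keyL l hmem h1
  set m := ((List.finRange 12).filter (· ∉ l)).map fp with hmdef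
  have hndm : m.Nodup := by
    refine List.Nodup.map fp_inj ?_
    exact List.Nodup.filter _ (List.nodup_finRange 12)
  have hmf : m.toFinset = sᶜ.image fp := by
    ext x
    simp only [hmdef, List.mem_toFinset, List.mem_map, List.mem_filter, List.mem_finRange,
      true_and, decide_eq_true_eq, Finset.mem_image, Finset.mem_compl]
    constructor
    · rintro ⟨a, ha, rfl⟩
      exact ⟨a, by rwa [← hts, List.mem_toFinset] at *, rfl⟩
    · rintro ⟨a, ha, rfl⟩
      refine ⟨a, ?_, rfl⟩
      rw [← hts, List.mem_toFinset] at ha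
      exact fun hc => ha hc
  have := (pvL_iff m hndm).mp h2
  rwa [hmf] at this

private lemma keyD1_iff (s : Finset (Fin 12)) (h6 : s.card = 6) :
    Pv s ↔ Pv (sᶜ.image fp) := by
  classical
  refine ⟨keyD1 s h6, fun h => ?_⟩
  have h6' : (sᶜ.image fp).card = 6 := by
    rw [Finset.card_image_of_injective _ fp_inj, Finset.card_compl, h6, Fintype.card_fin]
  have h2 := keyD1 _ h6' h
  have hcompl : (sᶜ.image fp)ᶜ = s.image fp := by
    ext x
    simp only [Finset.mem_compl, Finset.mem_image, not_exists, not_and]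
    constructor
    · intro hx
      by_cases hfx : fp x ∈ s
      · exact ⟨fp x, hfx, fp_fp x⟩
      · exact absurd (fp_fp x) (hx (fp x) hfx)
    · rintro ⟨a, ha, rfl⟩ b hb hba
      exact hb (fp_inj hba ▸ ha)
  rw [hcompl, Finset.image_image] at h2
  have himg : Finset.image (fp ∘ fp) s = s := by
    have : fp ∘ fp = id := funext fp_fp
    rw [this, Finset.image_id]
  rwa [himg] at h2

/-- Convert a set to the corresponding finset. -/
private noncomputable def FS (I : Set (Fin 12)) : Finset (Fin 12) := (Set.toFinite I).toFinset

private lemma FS_coe (I : Set (Fin 12)) : (FS I : Set (Fin 12)) = I := Set.Finite.coe_toFinset _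

private lemma mem_FS {I : Set (Fin 12)} {x : Fin 12} : x ∈ FS I ↔ x ∈ I :=
  Set.Finite.mem_toFinset _

private lemma indep_iff {M12 : Matroid (Fin 12)} (hM12 : RepBy M12 m12Mat)
    (I : Set (Fin 12)) : M12.Indep I ↔ Pv (FS I) := by
  have hfe : (fun x : I => m12Mat.transpose x) ∘
        (⇑(Equiv.subtypeEquivRight (fun x : Fin 12 => (mem_FS : x ∈ FS I ↔ x ∈ I)))) =
      (fun x : {x // x ∈ FS I} => vcol ↑x) := by
    funext x i
    simp only [Function.comp_apply, Equiv.subtypeEquivRight_apply, Matrix.transpose_apply, vcol]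
  have h2 : Pv (FS I) ↔ LinearIndependent (ZMod 2)
      (fun x : I => m12Mat.transpose x) := by
    unfold Pv
    rw [← hfe]
    exact linearIndependent_equiv _
  exact (hM12.2 I).trans h2.symm

private lemma pv_card_le (s : Finset (Fin 12)) (h : Pv s) : s.card ≤ 6 := by
  have := h.fintype_card_le_finrank
  rw [Module.finrank_pi, Fintype.card_fin, Fintype.card_coe] at this
  exact this

private lemma base_iff {M12 : Matroid (Fin 12)} (hM12 : RepBy M12 m12Mat)
    (B : Set (Fin 12)) : M12.IsBase B ↔ ((FS B).card = 6 ∧ Pv (FS B)) := by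
  constructor
  · intro hB
    refine ⟨?_, (indep_iff hM12 B).mp hB.indep⟩
    -- a 6-element independent set exists
    have hl0 : ([0, 1, 2, 3, 4, 5] : List (Fin 12)).Nodup := by decide
    have hPv0 : Pv ([0, 1, 2, 3, 4, 5] : List (Fin 12)).toFinset :=
      (pvL_iff _ hl0).mp (by decide)
    set s₀ : Finset (Fin 12) := ([0, 1, 2, 3, 4, 5] : List (Fin 12)).toFinset with hs₀
    have hFS₀ : FS (↑s₀) = s₀ := by
      apply Finset.coe_injective
      rw [FS_coe]
    have hInd₀ : M12.Indep ↑s₀ := (indep_iff hM12 _).mpr (by rwa [hFS₀])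
    obtain ⟨B₀, hB₀, hsB₀⟩ := hInd₀.exists_isBase_superset
    have hcard : B.encard = B₀.encard := hB.encard_eq_encard_of_isBase hB₀
    have hle : B₀.encard ≤ 6 := by
      rw [Set.Finite.encard_eq_coe_toFinset_card (Set.toFinite B₀)]
      have := pv_card_le _ ((indep_iff hM12 B₀).mp hB₀.indep)
      exact_mod_cast this
    have hge : (6 : ℕ∞) ≤ B₀.encard := by
      have h1 : (↑s₀ : Set (Fin 12)).encard ≤ B₀.encard := Set.encard_mono hsB₀
      rw [Set.encard_coe_eq_coe_finsetCard] at h1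
      have : s₀.card = 6 := by decide
      rw [this] at h1
      exact_mod_cast h1
    have hB6 : B.encard = 6 := hcard.trans (le_antisymm hle hge)
    have := Set.Finite.encard_eq_coe_toFinset_card (Set.toFinite B)
    rw [this] at hB6
    exact_mod_cast hB6
  · rintro ⟨h6, hPv⟩
    rw [Matroid.isBase_iff_maximal_indep]
    refine ⟨(indep_iff hM12 B).mpr hPv, fun I hI hBI => ?_⟩
    have hPvI : Pv (FS I) := (indep_iff hM12 I).mp hI
    have hsub : FS B ⊆ FS I := fun x hx => mem_FS.mpr (hBI (mem_FS.mp hx))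
    have hcard : (FS I).card ≤ (FS B).card := by
      rw [h6]
      exact pv_card_le _ hPvI
    have heq : FS B = FS I := Finset.eq_of_subset_of_card_le hsub hcard
    intro x hx
    have : x ∈ FS I := mem_FS.mpr hx
    rw [← heq] at this
    exact mem_FS.mp this

end M12SelfDual

/-- The matroid `M12` is self-dual. -/
theorem m12_self_dual (M12 : Matroid (Fin 12)) (hM12 : RepBy M12 m12Mat) : Iso M12 M12✶ := by
  classical
  refine ⟨fp, fun a _ b _ h => fp_inj h, ?_, ?_⟩
  · rw [Matroid.dual_ground, hM12.1, Set.image_univ]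
    exact Set.range_eq_univ.mpr fun y => ⟨fp y, fp_fp y⟩
  · intro I hIE
    rw [indep_iff hM12 I, Matroid.dual_indep_iff_exists']
    constructor
    · intro hPvI
      refine ⟨by rw [hM12.1]; exact Set.subset_univ _, ?_⟩
      have hI : M12.Indep I := (indep_iff hM12 I).mpr hPvI
      obtain ⟨B, hB, hIB⟩ := hI.exists_isBase_superset
      refine ⟨fp '' Bᶜ, ?_, ?_⟩
      · rw [base_iff hM12]
        obtain ⟨h6, hPvB⟩ := (base_iff hM12 B).mp hB
        have hFB : FS (fp '' Bᶜ) = ((FS B)ᶜ).image fp := by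
          apply Finset.coe_injective
          rw [FS_coe, Finset.coe_image, Finset.coe_compl, FS_coe]
        rw [hFB]
        refine ⟨?_, keyD1 _ h6 hPvB⟩
        rw [Finset.card_image_of_injective _ fp_inj, Finset.card_compl, h6, Fintype.card_fin]
      · refine (Set.disjoint_image_iff fp_inj).mpr (Set.disjoint_left.mpr ?_)
        intro x hxI hxBc
        exact hxBc (hIB hxI)
    · rintro ⟨-, B', hB', hdisj⟩
      have hIB : I ⊆ (fp '' B')ᶜ := by
        intro x hxI hxBim
        obtain ⟨b, hbB, hbx⟩ := hxBim
        have hfx : fp x ∈ B' := by rw [← hbx, fp_fp]; exact hbB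
        exact (Set.disjoint_left.mp hdisj ⟨x, hxI, rfl⟩) hfx
      have hBase : M12.IsBase ((fp '' B')ᶜ) := by
        rw [base_iff hM12]
        obtain ⟨h6', hPvB'⟩ := (base_iff hM12 B').mp hB'
        have hFC : FS ((fp '' B')ᶜ) = ((FS B').image fp)ᶜ := by
          apply Finset.coe_injective
          rw [FS_coe, Finset.coe_compl, Finset.coe_image, FS_coe]
        have hc : (((FS B').image fp)ᶜ).card = 6 := by
          rw [Finset.card_compl, Finset.card_image_of_injective _ fp_inj, h6', Fintype.card_fin]
        refine ⟨by rw [hFC]; exact hc, ?_⟩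
        rw [hFC, keyD1_iff _ hc, compl_compl, Finset.image_image]
        have : fp ∘ fp = id := funext fp_fp
        rwa [this, Finset.image_id]
      exact (indep_iff hM12 I).mp (hBase.indep.subset hIB)

end StrongSplitter
end

section
/- The matroid R17 has restrictions isomorphic to E5 and to R10; that is, R17 is a single-element-by-single-element extension of both E5 and R10 obtained by deletions only. -/
open Matroid Set

namespace StrongSplitter

variable {α β : Type*}

/-- Helper: a deletion minor of a binary matroid is isomorphic to another binary matroid,
given a column correspondence realized by an invertible row transformation. -/
lemma iso_del_of_cols {n a b : ℕ} (M : Matroid (Fin a)) (A : Matrix (Fin n) (Fin a) (ZMod 2))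
    (hM : RepBy M A) (N : Matroid (Fin b)) (B : Matrix (Fin n) (Fin b) (ZMod 2))
    (hN : RepBy N B)
    (T Ti : Matrix (Fin n) (Fin n) (ZMod 2)) (hTTi : T * Ti = 1)
    (D : Set (Fin a)) (f : Fin a → Fin b)
    (hinj : Set.InjOn f (univ \ D))
    (himg : f '' (univ \ D) = univ)
    (hcol : ∀ i : Fin a, i ∉ D → T.mulVec (A.transpose i) = B.transpose (f i)) :
    Iso (del M D) N := by
  have hTiT : Ti * T = 1 := mul_eq_one_comm.mp hTTi
  have hE : (del M D).E = univ \ D := by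
    simp [del, hM.1]
  -- the linear equivalence given by T
  let e : (Fin n → ZMod 2) ≃ₗ[ZMod 2] (Fin n → ZMod 2) :=
    LinearEquiv.ofLinear T.mulVecLin Ti.mulVecLin
      (by rw [← Matrix.mulVecLin_mul, hTTi, Matrix.mulVecLin_one])
      (by rw [← Matrix.mulVecLin_mul, hTiT, Matrix.mulVecLin_one])
  refine ⟨f, ?_, ?_, ?_⟩
  · rw [hE]; exact hinj
  · rw [hE, himg, hN.1]
  · intro I hI
    rw [hE] at hI
    have hIdep : (del M D).Indep I ↔ M.Indep I := by
      rw [del, Matroid.restrict_indep_iff, hM.1]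
      exact ⟨fun h => h.1, fun h => ⟨h, hI⟩⟩
    rw [hIdep, hM.2, hN.2]
    have hinj' : Set.InjOn f I := hinj.mono hI
    let ε : I ≃ (f '' I : Set (Fin b)) := Equiv.Set.imageOfInjOn f I hinj'
    have key : (fun y : (f '' I : Set (Fin b)) => B.transpose y) ∘ ε
        = fun x : I => T.mulVec (A.transpose x) := by
      funext x
      have hx : (x : Fin a) ∉ D := (hI x.2).2
      simp only [Function.comp_apply]
      rw [hcol _ hx]
      rfl
    constructor
    · intro h
      rw [← linearIndependent_equiv ε, key]
      have : (fun x : I => T.mulVec (A.transpose x))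
          = ⇑e.toLinearMap ∘ (fun x : I => A.transpose x) := rfl
      rw [this, LinearMap.linearIndependent_iff e.toLinearMap e.ker]
      exact h
    · intro h
      rw [← linearIndependent_equiv ε, key] at h
      have heq : (fun x : I => T.mulVec (A.transpose x))
          = ⇑e.toLinearMap ∘ (fun x : I => A.transpose x) := rfl
      rw [heq, LinearMap.linearIndependent_iff e.toLinearMap e.ker] at h
      exact h

/-- Column selection map for the E5 restriction of R17. -/
def f₁ : Fin 17 → Fin 10 := fun i => if h : (i : ℕ) < 10 then ⟨i, h⟩ else 0

/-- Column selection map for the R10 restriction of R17. -/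
def f₂ : Fin 17 → Fin 10 := ![0,1,0,2,8,0,3,6,0,4,0,0,0,5,9,0,7]

/-- The row transformation used for the R10 restriction. -/
def tMat : Matrix (Fin 5) (Fin 5) (ZMod 2) :=
  !![1,0,1,0,0; 0,1,0,0,0; 0,0,0,1,1; 0,0,0,0,1; 0,0,1,0,1]

/-- Its inverse. -/
def tMatInv : Matrix (Fin 5) (Fin 5) (ZMod 2) :=
  !![1,0,0,1,1; 0,1,0,0,0; 0,0,0,1,1; 0,0,1,1,0; 0,0,0,1,0]

/-- The matroid `R17` has restrictions isomorphic to `E5` and to `R10`. -/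
theorem r17_restrictions
    (E5 : Matroid (Fin 10)) (hE5 : RepBy E5 e5Mat)
    (R10 : Matroid (Fin 10)) (hR10 : RepBy R10 r10Mat)
    (R17 : Matroid (Fin 17)) (hR17 : RepBy R17 r17Mat) :
    (∃ D ⊆ R17.E, Iso (del R17 D) E5) ∧ (∃ D ⊆ R17.E, Iso (del R17 D) R10) := by
  constructor
  · refine ⟨{i : Fin 17 | 10 ≤ (i : ℕ)}, by rw [hR17.1]; exact subset_univ _, ?_⟩
    apply iso_del_of_cols R17 r17Mat hR17 E5 e5Mat hE5 1 1 (by rw [mul_one])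
        _ f₁
    · intro x hx y hy hxy
      simp only [mem_diff, mem_setOf_eq, not_le] at hx hy
      simp only [f₁, dif_pos hx.2, dif_pos hy.2, Fin.mk.injEq] at hxy
      exact Fin.ext hxy
    · ext y
      simp only [mem_image, mem_diff, mem_univ, mem_setOf_eq, not_le, true_and,
        iff_true]
      refine ⟨⟨(y : ℕ), by omega⟩, by simp, ?_⟩
      simp [f₁]
    · intro i hi
      simp only [mem_setOf_eq, not_le] at hi
      rw [Matrix.one_mulVec]
      fin_cases i <;> simp_all <;> (ext j; fin_cases j <;> rfl)
  · refine ⟨{i : Fin 17 | (i : ℕ) ∈ ({2,5,8,10,11,12,15} : Finset ℕ)},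
      by rw [hR17.1]; exact subset_univ _, ?_⟩
    apply iso_del_of_cols R17 r17Mat hR17 R10 r10Mat hR10 tMat tMatInv
        (by decide) _ f₂
    · intro x hx y hy hxy
      simp only [mem_diff, mem_setOf_eq] at hx hy
      have key : ∀ x y : Fin 17, ¬(x : ℕ) ∈ ({2,5,8,10,11,12,15} : Finset ℕ) →
          ¬(y : ℕ) ∈ ({2,5,8,10,11,12,15} : Finset ℕ) → f₂ x = f₂ y → x = y := by decide
      exact key x y hx.2 hy.2 hxy
    · ext y
      simp only [mem_image, mem_diff, mem_univ, mem_setOf_eq, true_and, iff_true]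
      fin_cases y
      · exact ⟨0, by decide, by decide⟩
      · exact ⟨1, by decide, by decide⟩
      · exact ⟨3, by decide, by decide⟩
      · exact ⟨6, by decide, by decide⟩
      · exact ⟨9, by decide, by decide⟩
      · exact ⟨13, by decide, by decide⟩
      · exact ⟨7, by decide, by decide⟩
      · exact ⟨16, by decide, by decide⟩
      · exact ⟨4, by decide, by decide⟩
      · exact ⟨14, by decide, by decide⟩
    · intro i hi
      simp only [mem_setOf_eq] at hi
      have key : ∀ i : Fin 17, ¬(i : ℕ) ∈ ({2,5,8,10,11,12,15} : Finset ℕ) →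
          tMat.mulVec (r17Mat.transpose i) = r10Mat.transpose (f₂ i) := by decide
      exact key i hi


end StrongSplitter
end
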